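/- Let s ∈ [0,1]^{D×K} be a score matrix, π ∈ Δ^K a policy, and b ≠ g two arms with δ = π(b). Suppose there are a subset J ⊆ [D] and an injective map φ : J → [D] with φ(J) ∩ J = ∅ such that: (i) for every j ∈ J, writing i = φ(j), one has s_{i,b} = 0, s_{i,g} = 1, s_{j,g} ≥ 1/2, and s_{j,a} ≥ (1/2)·s_{i,a} for every arm a ≠ b; and (ii) for every user d ∉ J ∪ φ(J), s_{d,g} ≥ s_{d,b}. Define the policy π' by π'(b) = 0, π'(g) = π(g) + δ, and π'(a) = π(a) for all other arms a. Then NSW(π', s) ≥ NSW(π, s). -/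

import Mathlib

open Finset

/-- The Nash social welfare of a policy `π` under score matrix `s`. -/
def NSW {D K : ℕ} (π : Fin K → ℝ) (s : Fin D → Fin K → ℝ) : ℝ :=
  ∏ d, ∑ a, π a * s d a

/-- Remark 1 of the lower-bound proof: transferring all of the probability
mass from a "bad" winner arm `b` to a "good" winner arm `g` does not decrease the Nash
social welfare, where each user whose winner is `b` (a user `φ j`, `j ∈ J`) is paired with
a distinct user `j ∈ J` whose winner is `g`. -/
theorem nsw_transfer_mass (D K : ℕ)
    (s : Fin D → Fin K → ℝ)
    (hs : ∀ d a, s d a ∈ Set.Icc (0 : ℝ) 1)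
    (π : Fin K → ℝ) (hπ0 : ∀ a, 0 ≤ π a) (hπ1 : ∑ a, π a = 1)
    (b g : Fin K) (hbg : b ≠ g)
    (J : Finset (Fin D)) (φ : Fin D → Fin D)
    (hφinj : Set.InjOn φ J)
    (hφdisj : ∀ j ∈ J, φ j ∉ J)
    (hpairs : ∀ j ∈ J,
      s (φ j) b = 0 ∧ s (φ j) g = 1 ∧ 1 / 2 ≤ s j g ∧
      ∀ a, a ≠ b → (1 / 2) * s (φ j) a ≤ s j a)
    (hrest : ∀ d, d ∉ J → d ∉ J.image φ → s d b ≤ s d g)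
    (π' : Fin K → ℝ)
    (hπ' : π' = fun a => if a = b then 0 else if a = g then π g + π b else π a) :
    NSW π s ≤ NSW π' s := by
  set δ := π b with hδdef
  have hδ : 0 ≤ δ := hπ0 b
  set u : Fin D → ℝ := fun d => ∑ a, π a * s d a with hu
  set u' : Fin D → ℝ := fun d => ∑ a, π' a * s d a with hu'
  have hunn : ∀ d, 0 ≤ u d := by
    intro d
    exact Finset.sum_nonneg fun a _ => mul_nonneg (hπ0 a) (hs d a).1
  -- u' d = u d + δ * (s d g - s d b)
  have hkey : ∀ d, u' d = u d + δ * (s d g - s d b) := by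
    intro d
    have : ∀ a : Fin K, π' a * s d a =
        π a * s d a + ((if a = b then -(δ * s d a) else 0) +
          (if a = g then δ * s d a else 0)) := by
      intro a
      subst hπ'
      by_cases hab : a = b
      · subst hab
        simp [hbg]
        try ring
      · by_cases hag : a = g
        · subst hag
          simp [hab]
          try ring
        · simp [hab, hag]
    simp only [hu, hu', this, Finset.sum_add_distrib]
    rw [Finset.sum_ite_eq' univ b (fun a => -(δ * s d a)),
      Finset.sum_ite_eq' univ g (fun a => δ * s d a)]
    simp
    ring
  -- users outside the pairs
  have hout : ∀ d, d ∉ J → d ∉ J.image φ → u d ≤ u' d := by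
    intro d hd1 hd2
    rw [hkey d]
    nlinarith [hrest d hd1 hd2, hδ]
  -- the pair inequality
  have hpair : ∀ j ∈ J, u j * u (φ j) ≤ u' j * u' (φ j) := by
    intro j hj
    obtain ⟨h1, h2, h3, h4⟩ := hpairs j hj
    -- half-sum inequality: u (φ j) / 2 ≤ u j - δ * s j b
    have hhalf : u (φ j) / 2 ≤ u j - δ * s j b := by
      have huφ : u (φ j) = ∑ a ∈ univ.erase b, π a * s (φ j) a := by
        show (∑ a : Fin K, π a * s (φ j) a) = ∑ a ∈ univ.erase b, π a * s (φ j) a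
        rw [← Finset.add_sum_erase univ _ (mem_univ b), h1]
        ring_nf
      have huj : u j - δ * s j b = ∑ a ∈ univ.erase b, π a * s j a := by
        show (∑ a : Fin K, π a * s j a) - δ * s j b = ∑ a ∈ univ.erase b, π a * s j a
        rw [← Finset.add_sum_erase univ (fun a => π a * s j a) (mem_univ b)]
        ring_nf
        rw [hδdef]; ring
      rw [huφ, huj, div_eq_mul_inv, Finset.sum_mul]
      apply Finset.sum_le_sum
      intro a ha
      have hab : a ≠ b := Finset.ne_of_mem_erase ha
      have := h4 a hab
      nlinarith [hπ0 a]
    rw [hkey j, hkey (φ j), h1, h2]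
    have hsjb := (hs j b).2
    have hsjb0 := (hs j b).1
    have hsjg := (hs j g).2
    have huφ0 := hunn (φ j)
    have huj0 := hunn j
    nlinarith [mul_nonneg hδ hδ, mul_nonneg hδ (hs j g).1, mul_nonneg hδ huφ0,
      mul_nonneg (mul_nonneg hδ hδ) (hs j g).1]
  -- assemble the products
  have hdisj : Disjoint J (J.image φ) := by
    rw [Finset.disjoint_left]
    intro x hx hx'
    obtain ⟨y, hy, rfl⟩ := Finset.mem_image.mp hx'
    exact hφdisj y hy hx
  set T : Finset (Fin D) := J ∪ J.image φ with hT
  have hsplit : ∀ f : Fin D → ℝ, ∏ d, f d = (∏ j ∈ J, f j * f (φ j)) * ∏ d ∈ Tᶜ, f d := by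
    intro f
    rw [← Finset.prod_mul_prod_compl T f, hT, Finset.prod_union hdisj,
      Finset.prod_image (fun x hx y hy => hφinj hx hy), Finset.prod_mul_distrib]
  have hP1 : (∏ j ∈ J, u j * u (φ j)) ≤ ∏ j ∈ J, u' j * u' (φ j) := by
    apply Finset.prod_le_prod
    · intro j _; exact mul_nonneg (hunn j) (hunn (φ j))
    · intro j hj; exact hpair j hj
  have hP2 : (∏ d ∈ Tᶜ, u d) ≤ ∏ d ∈ Tᶜ, u' d := by
    apply Finset.prod_le_prod
    · intro d _; exact hunn d
    · intro d hd
      rw [Finset.mem_compl, hT, Finset.mem_union] at hd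
      push_neg at hd
      exact hout d hd.1 hd.2
  have h1 : NSW π s = (∏ j ∈ J, u j * u (φ j)) * ∏ d ∈ Tᶜ, u d := hsplit u
  have h2 : NSW π' s = (∏ j ∈ J, u' j * u' (φ j)) * ∏ d ∈ Tᶜ, u' d := hsplit u'
  rw [h1, h2]
  apply mul_le_mul hP1 hP2
  · exact Finset.prod_nonneg fun d _ => hunn d
  · exact Finset.prod_nonneg fun j hj =>
      le_trans (mul_nonneg (hunn j) (hunn (φ j))) (hpair j hj)
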